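/- Let U = {x ∈ ℝ^N : x_N ≤ γ(x')} be a subgraph where γ : ℝ^{N−1} → ℝ satisfies sup{ |γ(x') − γ(y')| : x', y' ∈ ℝ^{N−1}, |x'−y'| ≤ 1 } < +∞. Then for every ρ > 0, the Hausdorff distance d_H(U, U_ρ) between U and its positive-distance-interior U_ρ = {x ∈ U : dist(x, ∂U) ≥ ρ} is finite. -/

import Mathlib

open Filter Metric Topology

/-- The first `n` coordinates of a point of `ℝ^{n+1}`. -/
noncomputable def firstCoords (n : ℕ) (x : EuclideanSpace ℝ (Fin (n + 1))) :
    EuclideanSpace ℝ (Fin n) :=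
  WithLp.toLp 2 (fun i : Fin n => x i.castSucc)

/-- The subgraph `U = {x = (x', x_N) : x_N ≤ γ(x')}` of `γ : ℝ^{N-1} → ℝ`. -/
def subgraphSet (n : ℕ) (γ : EuclideanSpace ℝ (Fin n) → ℝ) :
    Set (EuclideanSpace ℝ (Fin (n + 1))) :=
  {x | x (Fin.last n) ≤ γ (firstCoords n x)}

lemma dist_firstCoords_le (n : ℕ) (x y : EuclideanSpace ℝ (Fin (n + 1))) :
    dist (firstCoords n x) (firstCoords n y) ≤ dist x y := by
  rw [EuclideanSpace.dist_eq, EuclideanSpace.dist_eq]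
  apply Real.sqrt_le_sqrt
  rw [Fin.sum_univ_castSucc]
  have : (0:ℝ) ≤ dist (x (Fin.last n)) (y (Fin.last n)) ^ 2 := sq_nonneg _
  simp only [firstCoords, PiLp.toLp_apply]
  linarith

lemma dist_coord_le {m : ℕ} (i : Fin m) (x y : EuclideanSpace ℝ (Fin m)) :
    dist (x i) (y i) ≤ dist x y := by
  rw [EuclideanSpace.dist_eq]
  have h1 : dist (x i) (y i) = Real.sqrt (dist (x i) (y i) ^ 2) :=
    (Real.sqrt_sq dist_nonneg).symm
  rw [h1]
  apply Real.sqrt_le_sqrt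
  exact Finset.single_le_sum (f := fun j => dist (x j) (y j) ^ 2)
    (fun j _ => sq_nonneg _) (Finset.mem_univ i)

lemma chain_osc {n : ℕ} (γ : EuclideanSpace ℝ (Fin n) → ℝ) (K : ℝ)
    (hK : ∀ x' y' : EuclideanSpace ℝ (Fin n), dist x' y' ≤ 1 → |γ x' - γ y'| ≤ K) :
    ∀ m : ℕ, ∀ x' y' : EuclideanSpace ℝ (Fin n), dist x' y' ≤ m →
      |γ x' - γ y'| ≤ m * K := by
  have hK0 : 0 ≤ K := by simpa using hK 0 0 (by simp)
  intro m
  induction m with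
  | zero =>
    intro x' y' h
    have : x' = y' := by
      rw [← dist_le_zero]; simpa using h
    simp [this]
  | succ m ih =>
    intro x' y' h
    by_cases hd : dist x' y' ≤ m
    · have h1 := ih x' y' hd
      have : ((m:ℝ) + 1) * K = (↑(m+1) : ℝ) * K := by push_cast; ring
      nlinarith [h1]
    · push_neg at hd
      set d := dist x' y' with hdd
      have hd0 : 0 < d := lt_of_le_of_lt (Nat.cast_nonneg m) hd
      set t : ℝ := m / d with ht
      have ht0 : 0 ≤ t := div_nonneg (Nat.cast_nonneg m) hd0.le
      have ht1 : t ≤ 1 := by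
        rw [ht, div_le_one hd0]; exact hd.le
      set z : EuclideanSpace ℝ (Fin n) := x' + t • (y' - x') with hz
      have hnorm : ‖y' - x'‖ = d := by rw [hdd, dist_comm, dist_eq_norm]
      have hxz : dist x' z = m := by
        rw [dist_eq_norm, hz]
        have : x' - (x' + t • (y' - x')) = -(t • (y' - x')) := by abel
        rw [this, norm_neg, norm_smul, Real.norm_eq_abs, abs_of_nonneg ht0, hnorm, ht,
          div_mul_cancel₀ _ hd0.ne']
      have hzy : dist z y' ≤ 1 := by
        rw [dist_eq_norm, hz]
        have : x' + t • (y' - x') - y' = (t - 1) • (y' - x') := by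
          rw [sub_smul, one_smul]; abel
        rw [this, norm_smul, Real.norm_eq_abs, abs_of_nonpos (by linarith), hnorm]
        have : (1 - t) * d = d - m := by
          rw [sub_mul, one_mul, ht, div_mul_cancel₀ _ hd0.ne']
        rw [neg_sub, this]
        have : d ≤ (m : ℝ) + 1 := by
          rw [hdd]; exact_mod_cast h.trans_eq (by push_cast; ring)
        linarith
      have h1 : |γ x' - γ z| ≤ m * K := ih x' z (le_of_eq hxz)
      have h2 : |γ z - γ y'| ≤ K := hK z y' hzy
      calc |γ x' - γ y'| = |(γ x' - γ z) + (γ z - γ y')| := by ring_nf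
        _ ≤ |γ x' - γ z| + |γ z - γ y'| := abs_add_le _ _
        _ ≤ m * K + K := add_le_add h1 h2
        _ = (↑(m + 1)) * K := by push_cast; ring

/-- if `γ` has uniformly bounded local oscillations,
i.e. `sup{|γ(x') − γ(y')| : |x'−y'| ≤ 1} < +∞`, then for every `ρ > 0` the Hausdorff
distance between the subgraph `U` of `γ` and its positive-distance-interior
`U_ρ = {x ∈ U : dist(x, ∂U) ≥ ρ}` is finite. -/
theorem subgraph_hausdorffEdist_interior_ne_top (n : ℕ) (hn : 1 ≤ n)
    (γ : EuclideanSpace ℝ (Fin n) → ℝ)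
    (hosc : ∃ K : ℝ, ∀ x' y' : EuclideanSpace ℝ (Fin n),
      dist x' y' ≤ 1 → |γ x' - γ y'| ≤ K)
    (ρ : ℝ) (hρ : 0 < ρ) :
    EMetric.hausdorffEdist (subgraphSet n γ)
      {x ∈ subgraphSet n γ |
        ρ ≤ Metric.infDist x (frontier (subgraphSet n γ))} ≠ ⊤ := by
  obtain ⟨K, hK⟩ := hosc
  have hK0 : 0 ≤ K := by simpa using hK 0 0 (by simp)
  set U := subgraphSet n γ with hU
  set m : ℕ := ⌈ρ⌉₊ with hm
  have hρm : ρ ≤ m := Nat.le_ceil ρ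
  set C : ℝ := m * K + ρ + 1 with hC
  have hC0 : 0 < C := by positivity
  -- some auxiliary points showing U nonempty and ≠ univ
  have hfirst_single : ∀ c : ℝ,
      firstCoords n (EuclideanSpace.single (Fin.last n) c) = 0 := by
    intro c
    ext i
    have : (i.castSucc : Fin (n+1)) ≠ Fin.last n := (Fin.castSucc_lt_last i).ne
    simp [firstCoords, EuclideanSpace.single_apply, this]
  have hUne : U.Nonempty := by
    refine ⟨EuclideanSpace.single (Fin.last n) (γ 0 - 1), ?_⟩
    simp only [hU, subgraphSet, Set.mem_setOf_eq, hfirst_single]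
    simp [EuclideanSpace.single_apply]
  have hUnu : U ≠ Set.univ := by
    intro h
    have : EuclideanSpace.single (Fin.last n) (γ 0 + 1) ∈ U := h ▸ Set.mem_univ _
    simp only [hU, subgraphSet, Set.mem_setOf_eq, hfirst_single] at this
    simp [EuclideanSpace.single_apply] at this
    linarith
  have hfr : (frontier U).Nonempty := by
    rw [Set.nonempty_iff_ne_empty]
    intro h
    have := isClopen_iff_frontier_eq_empty.mpr h
    rcases isClopen_iff.mp this with h1 | h1
    · exact hUne.ne_empty h1
    · exact hUnu h1
  -- The key claim: points deep below the graph are far from the frontier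
  have key : ∀ y : EuclideanSpace ℝ (Fin (n+1)),
      y (Fin.last n) ≤ γ (firstCoords n y) - C →
      y ∈ U ∧ ρ ≤ Metric.infDist y (frontier U) := by
    intro y hy
    have hball : Metric.ball y ρ ⊆ U := by
      intro z hz
      rw [Metric.mem_ball] at hz
      have h1 : dist (firstCoords n z) (firstCoords n y) ≤ m :=
        ((dist_firstCoords_le n z y).trans hz.le).trans hρm
      have h2 : |γ (firstCoords n z) - γ (firstCoords n y)| ≤ m * K :=
        chain_osc γ K hK m _ _ h1
      have h3 : dist (z (Fin.last n)) (y (Fin.last n)) ≤ dist z y :=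
        dist_coord_le _ z y
      rw [Real.dist_eq] at h3
      have h4 : z (Fin.last n) ≤ y (Fin.last n) + ρ := by
        have := abs_le.mp (h3.trans hz.le)
        linarith [this.1, this.2]
      have h5 : γ (firstCoords n y) - m * K ≤ γ (firstCoords n z) := by
        have := abs_le.mp h2
        linarith [this.1, this.2]
      show z (Fin.last n) ≤ γ (firstCoords n z)
      calc z (Fin.last n) ≤ y (Fin.last n) + ρ := h4
        _ ≤ γ (firstCoords n y) - C + ρ := by linarith
        _ ≤ γ (firstCoords n z) := by
            rw [hC] at *
            linarith
    have hyU : y ∈ U := hball (Metric.mem_ball_self hρ)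
    refine ⟨hyU, ?_⟩
    by_contra hlt
    push_neg at hlt
    obtain ⟨w, hw, hwd⟩ := (Metric.infDist_lt_iff hfr).mp hlt
    have hwball : w ∈ Metric.ball y ρ := by
      rw [Metric.mem_ball, dist_comm]; exact hwd
    have hwi : w ∈ interior U := interior_maximal hball Metric.isOpen_ball hwball
    rw [frontier_eq_closure_inter_closure] at hw
    have : w ∉ interior U := by
      intro hcon
      have := hw.2
      rw [closure_compl] at this
      exact this hcon
    exact this hwi
  -- the shifted point
  apply ne_top_of_le_ne_top (b := ENNReal.ofReal C) ENNReal.ofReal_ne_top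
  apply EMetric.hausdorffEdist_le_of_infEdist
  · intro x hx
    set y : EuclideanSpace ℝ (Fin (n+1)) :=
      x - C • EuclideanSpace.single (Fin.last n) (1:ℝ) with hyd
    have hfy : firstCoords n y = firstCoords n x := by
      ext i
      have hne : (i.castSucc : Fin (n+1)) ≠ Fin.last n := (Fin.castSucc_lt_last i).ne
      simp [hyd, firstCoords, EuclideanSpace.single_apply, hne]
    have hylast : y (Fin.last n) = x (Fin.last n) - C := by
      simp [hyd, EuclideanSpace.single_apply]
    have hxU : x (Fin.last n) ≤ γ (firstCoords n x) := hx
    have hyC : y (Fin.last n) ≤ γ (firstCoords n y) - C := by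
      rw [hylast, hfy]; linarith
    obtain ⟨hyU, hyinf⟩ := key y hyC
    have hdist : dist x y = C := by
      rw [dist_eq_norm, hyd]
      have : x - (x - C • EuclideanSpace.single (Fin.last n) (1:ℝ)) =
          C • EuclideanSpace.single (Fin.last n) (1:ℝ) := by abel
      rw [this, norm_smul, EuclideanSpace.norm_single]
      simp [abs_of_pos hC0]
    calc EMetric.infEdist x {x ∈ U | ρ ≤ Metric.infDist x (frontier U)}
        ≤ edist x y := EMetric.infEdist_le_edist_of_mem ⟨hyU, hyinf⟩
      _ = ENNReal.ofReal (dist x y) := by rw [edist_dist]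
      _ ≤ ENNReal.ofReal C := by rw [hdist]
  · intro x hx
    calc EMetric.infEdist x U ≤ edist x x := EMetric.infEdist_le_edist_of_mem hx.1
      _ = 0 := edist_self x
      _ ≤ ENNReal.ofReal C := zero_le
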